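/- The Adams consensus method fails condition (A4): there exist rooted trees T_1 with nontrivial clusters {a,b,c,e} and {a,b,c,d,e}, and T_2 with nontrivial clusters {b,c,d}, {b,c,d,e}, {a,b,c,d,e}, both on X = {a,b,c,d,e,f}, and Y = {b,c,d,e}, such that the Adams consensus of (T_1|Y, T_2|Y) contains the cluster {b,c}, while the restriction to Y of the Adams consensus of (T_1, T_2) does not contain {b,c}; in particular the former is neither equal to nor refined by the latter's relevant restriction. -/

import Mathlib

set_option maxRecDepth 10000


def IsHierarchyOn {α : Type*} [DecidableEq α] (X : Finset α) (T : Finset (Finset α)) : Prop :=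
  (∀ A ∈ T, A ⊆ X ∧ A.Nonempty) ∧ X ∈ T ∧ (∀ x ∈ X, ({x} : Finset α) ∈ T) ∧
  ∀ A ∈ T, ∀ B ∈ T, A ∩ B = ∅ ∨ A ⊆ B ∨ B ⊆ A

def restrict {α : Type*} [DecidableEq α] (T : Finset (Finset α)) (W : Finset α) :
    Finset (Finset α) :=
  (T.image (· ∩ W)).filter (·.Nonempty)

/-- The maximal proper clusters of a tree on `X` (the children of the root). -/
def maxProper {α : Type*} [DecidableEq α] (X : Finset α) (T : Finset (Finset α)) :
    Finset (Finset α) :=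
  T.filter fun A => A ≠ X ∧ ∀ B ∈ T, A ⊆ B → B = A ∨ B = X

/-- The defining recursion of the Adams consensus of two trees on a common leaf set `X`:
it is a hierarchy on `X`, its maximal proper clusters are the nonempty pairwise
intersections of maximal proper clusters of the two inputs, and within each such part the
construction recurses on the restricted trees. -/
def AdamsSpec {α : Type*} [DecidableEq α]
    (adams : Finset (Finset α) → Finset (Finset α) → Finset (Finset α)) : Prop :=
  ∀ (X : Finset α) (T₁ T₂ : Finset (Finset α)),
    IsHierarchyOn X T₁ → IsHierarchyOn X T₂ →
      IsHierarchyOn X (adams T₁ T₂) ∧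
      ((maxProper X (adams T₁ T₂) : Set (Finset α)) =
        {Q | Q.Nonempty ∧ ∃ P₁ ∈ maxProper X T₁, ∃ P₂ ∈ maxProper X T₂, Q = P₁ ∩ P₂}) ∧
      ∀ Q ∈ maxProper X (adams T₁ T₂),
        restrict (adams T₁ T₂) Q = adams (restrict T₁ Q) (restrict T₂ Q)

/-- Adams consensus fails (A4): with `a,…,f = 0,…,5`, for `T₁` with nontrivial clusters
`{a,b,c,e}`, `{a,b,c,d,e}`, `T₂` with nontrivial clusters `{b,c,d}`, `{b,c,d,e}`,
`{a,b,c,d,e}`, and `Y = {b,c,d,e}`, the Adams consensus of `(T₁|Y, T₂|Y)` contains the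
cluster `{b,c}` but the restriction to `Y` of the Adams consensus of `(T₁, T₂)` does not;
in particular the former is not refined by the latter. -/
def tX : Finset (Fin 6) := {0, 1, 2, 3, 4, 5}
def tT₁ : Finset (Finset (Fin 6)) :=
  {{0, 1, 2, 4}, {0, 1, 2, 3, 4}, tX, {0}, {1}, {2}, {3}, {4}, {5}}
def tT₂ : Finset (Finset (Fin 6)) :=
  {{1, 2, 3}, {1, 2, 3, 4}, {0, 1, 2, 3, 4}, tX, {0}, {1}, {2}, {3}, {4}, {5}}
def tY : Finset (Fin 6) := {1, 2, 3, 4}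
def tA : Finset (Fin 6) := {0, 1, 2, 3, 4}
def tB : Finset (Fin 6) := {1, 2, 4}

lemma mem_of_mem_maxProper {α : Type*} [DecidableEq α] {Z A : Finset α}
    {T : Finset (Finset α)} (h : A ∈ maxProper Z T) : A ∈ T :=
  (Finset.mem_filter.mp h).1

lemma exists_maxProper_superset {α : Type*} [DecidableEq α] {Z : Finset α}
    {T : Finset (Finset α)} {A : Finset α}
    (hA : A ∈ T) (hne : A ≠ Z) : ∃ M ∈ maxProper Z T, A ⊆ M := by
  classical
  have hS : (T.filter fun B => A ⊆ B ∧ B ≠ Z).Nonempty :=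
    ⟨A, by simp [hA, hne]⟩
  obtain ⟨M, hM, hmax⟩ : ∃ M ∈ T.filter (fun B => A ⊆ B ∧ B ≠ Z), ∀ x ∈ T.filter (fun B => A ⊆ B ∧ B ≠ Z), ¬ M < x := by
    obtain ⟨M, hMx⟩ := Finset.exists_maximal hS
    exact ⟨M, hMx.1, fun x hx hlt => lt_irrefl M (lt_of_lt_of_le hlt (hMx.2 hx hlt.le))⟩
  simp only [Finset.mem_filter] at hM
  refine ⟨M, ?_, hM.2.1⟩
  simp only [maxProper, Finset.mem_filter]
  refine ⟨hM.1, hM.2.2, fun B hB hMB => ?_⟩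
  by_cases hBZ : B = Z
  · exact Or.inr hBZ
  · left
    by_contra hne2
    exact hmax B (by simp [hB, hM.2.1.trans hMB, hBZ])
      (lt_of_le_of_ne hMB fun h => hne2 h.symm)

theorem stmt_17 (adams : Finset (Finset (Fin 6)) → Finset (Finset (Fin 6)) → Finset (Finset (Fin 6)))
    (hadams : AdamsSpec adams) :
    let X : Finset (Fin 6) := {0, 1, 2, 3, 4, 5}
    let T₁ : Finset (Finset (Fin 6)) :=
      {{0, 1, 2, 4}, {0, 1, 2, 3, 4}, X, {0}, {1}, {2}, {3}, {4}, {5}}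
    let T₂ : Finset (Finset (Fin 6)) :=
      {{1, 2, 3}, {1, 2, 3, 4}, {0, 1, 2, 3, 4}, X, {0}, {1}, {2}, {3}, {4}, {5}}
    let Y : Finset (Fin 6) := {1, 2, 3, 4}
    ({1, 2} : Finset (Fin 6)) ∈ adams (restrict T₁ Y) (restrict T₂ Y) ∧
    ({1, 2} : Finset (Fin 6)) ∉ restrict (adams T₁ T₂) Y ∧
    ¬ adams (restrict T₁ Y) (restrict T₂ Y) ⊆ restrict (adams T₁ T₂) Y := by 
  intro X T₁ T₂ Y
  have hX : X = tX := rfl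
  have hT₁ : T₁ = tT₁ := rfl
  have hT₂ : T₂ = tT₂ := rfl
  have hY : Y = tY := rfl
  clear_value X T₁ T₂ Y
  subst hX hT₁ hT₂ hY
  -- Part 1
  obtain ⟨hH1, hM1, -⟩ := hadams tY (restrict tT₁ tY) (restrict tT₂ tY)
    (by unfold IsHierarchyOn; decide) (by unfold IsHierarchyOn; decide)
  have h12 : ({1, 2} : Finset (Fin 6)) ∈
      maxProper tY (adams (restrict tT₁ tY) (restrict tT₂ tY)) := by
    rw [← Finset.mem_coe, hM1]
    exact ⟨by decide, {1, 2, 4}, by decide, {1, 2, 3}, by decide, by decide⟩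
  have p1 : ({1, 2} : Finset (Fin 6)) ∈ adams (restrict tT₁ tY) (restrict tT₂ tY) :=
    mem_of_mem_maxProper h12
  -- Part 2 setup
  obtain ⟨hH, hM, hrec⟩ := hadams tX tT₁ tT₂
    (by unfold IsHierarchyOn; decide) (by unfold IsHierarchyOn; decide)
  have hAmem : tA ∈ maxProper tX (adams tT₁ tT₂) := by
    rw [← Finset.mem_coe, hM]
    exact ⟨by decide, {0, 1, 2, 3, 4}, by decide, {0, 1, 2, 3, 4}, by decide, by decide⟩
  have hres : restrict (adams tT₁ tT₂) tA = adams (restrict tT₁ tA) (restrict tT₂ tA) :=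
    hrec tA hAmem
  obtain ⟨hH2, hM2, hrec2⟩ := hadams tA (restrict tT₁ tA) (restrict tT₂ tA)
    (by unfold IsHierarchyOn; decide) (by unfold IsHierarchyOn; decide)
  have hBmem : tB ∈ maxProper tA (adams (restrict tT₁ tA) (restrict tT₂ tA)) := by
    rw [← Finset.mem_coe, hM2]
    exact ⟨by decide, {0, 1, 2, 4}, by decide, {1, 2, 3, 4}, by decide, by decide⟩
  have hres2 : restrict (adams (restrict tT₁ tA) (restrict tT₂ tA)) tB
      = adams (restrict (restrict tT₁ tA) tB) (restrict (restrict tT₂ tA) tB) :=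
    hrec2 tB hBmem
  obtain ⟨hH3, hM3, -⟩ := hadams tB (restrict (restrict tT₁ tA) tB)
    (restrict (restrict tT₂ tA) tB)
    (by unfold IsHierarchyOn; decide) (by unfold IsHierarchyOn; decide)
  -- {1,2} not in the innermost Adams tree
  have hkey : ({1, 2} : Finset (Fin 6)) ∉
      adams (restrict (restrict tT₁ tA) tB) (restrict (restrict tT₂ tA) tB) := by
    intro hmem
    obtain ⟨M, hM', hsub⟩ := exists_maxProper_superset (Z := tB) hmem (by decide)
    rw [← Finset.mem_coe, hM3] at hM'
    obtain ⟨-, P₁, hP₁, P₂, hP₂, rfl⟩ := hM'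
    have e : maxProper tB (restrict (restrict tT₁ tA) tB)
        = ({{1}, {2}, {4}} : Finset (Finset (Fin 6))) := by decide
    rw [e] at hP₁
    have h2 : (1 : Fin 6) ∈ P₁ := Finset.inter_subset_left (hsub (by decide))
    have h3 : (2 : Fin 6) ∈ P₁ := Finset.inter_subset_left (hsub (by decide))
    fin_cases hP₁
    · exact absurd h3 (by decide)
    · exact absurd h2 (by decide)
    · exact absurd h2 (by decide)
  -- Part 2
  have p2 : ({1, 2} : Finset (Fin 6)) ∉ restrict (adams tT₁ tT₂) tY := by
    intro hmem
    rw [restrict, Finset.mem_filter, Finset.mem_image] at hmem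
    obtain ⟨⟨C, hC, hCY⟩, -⟩ := hmem
    have h1C : (1 : Fin 6) ∈ C := by
      have h : (1 : Fin 6) ∈ C ∩ tY := by rw [hCY]; decide
      exact (Finset.mem_inter.mp h).1
    have hAin : tA ∈ adams tT₁ tT₂ := mem_of_mem_maxProper hAmem
    have hCA : C ⊆ tA := by
      rcases hH.2.2.2 C hC tA hAin with h | h | h
      · have h1 : (1 : Fin 6) ∈ C ∩ tA := Finset.mem_inter.mpr ⟨h1C, by decide⟩
        rw [h] at h1
        exact absurd h1 (by decide)
      · exact h
      · exfalso
        have h3 : (3 : Fin 6) ∈ C ∩ tY :=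
          Finset.mem_inter.mpr ⟨h (by decide), by decide⟩
        rw [hCY] at h3
        exact absurd h3 (by decide)
    have hC' : C ∈ adams (restrict tT₁ tA) (restrict tT₂ tA) := by
      rw [← hres, restrict, Finset.mem_filter, Finset.mem_image]
      exact ⟨⟨C, hC, Finset.inter_eq_left.mpr hCA⟩, ⟨1, h1C⟩⟩
    have hBin : tB ∈ adams (restrict tT₁ tA) (restrict tT₂ tA) :=
      mem_of_mem_maxProper hBmem
    have hCB : C ⊆ tB := by
      rcases hH2.2.2.2 C hC' tB hBin with h | h | h
      · have h1 : (1 : Fin 6) ∈ C ∩ tB := Finset.mem_inter.mpr ⟨h1C, by decide⟩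
        rw [h] at h1
        exact absurd h1 (by decide)
      · exact h
      · exfalso
        have h4 : (4 : Fin 6) ∈ C ∩ tY :=
          Finset.mem_inter.mpr ⟨h (by decide), by decide⟩
        rw [hCY] at h4
        exact absurd h4 (by decide)
    have hCeq : C = {1, 2} := by
      rw [← hCY, Finset.inter_eq_left.mpr (hCB.trans (by decide : tB ⊆ tY))]
    subst hCeq
    have hmem2 : ({1, 2} : Finset (Fin 6)) ∈
        restrict (adams (restrict tT₁ tA) (restrict tT₂ tA)) tB := by
      rw [restrict, Finset.mem_filter, Finset.mem_image]
      exact ⟨⟨{1, 2}, hC', by decide⟩, by decide⟩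
    rw [hres2] at hmem2
    exact hkey hmem2
  exact ⟨p1, p2, fun hsub => p2 (hsub p1)⟩
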